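/- Let n ≥ 2. There exists a constant c_n > 0 depending only on n such that for every r > 0 and every Lebesgue measurable set S ⊆ {y ∈ ℝ^n : r/2 < |y| ≤ r} with |S| ≥ ½·|{y ∈ ℝ^n : r/2 < |y| ≤ r}|, one has ∫_S y₁²/|y|^{n+2} dy ≥ c_n, where y₁ denotes the first coordinate of y and |·| denotes Lebesgue measure. -/

import Mathlib

open MeasureTheory

noncomputable section

/-- a measurable subset `S` covering at least half of the ring
`{r/2 < |y| ≤ r}` carries at least a fixed (dimensional) amount of the integral of
`y₁²/|y|^{n+2}`. -/
theorem stmt5 (n : ℕ) (hn : 2 ≤ n) :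
    ∃ c : ℝ, 0 < c ∧
      ∀ r : ℝ, 0 < r →
      ∀ S : Set (EuclideanSpace ℝ (Fin n)), MeasurableSet S →
      S ⊆ {y : EuclideanSpace ℝ (Fin n) | r / 2 < ‖y‖ ∧ ‖y‖ ≤ r} →
      volume {y : EuclideanSpace ℝ (Fin n) | r / 2 < ‖y‖ ∧ ‖y‖ ≤ r} ≤ 2 * volume S →
      c ≤ ∫ y in S, (y (⟨0, by omega⟩ : Fin n)) ^ 2 / ‖y‖ ^ ((n : ℝ) + 2) := by
  classical
  have : Nonempty (Fin n) := ⟨⟨0, by omega⟩⟩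
  set i0 : Fin n := ⟨0, by omega⟩
  -- unit ball volume constant
  set ω : ℝ := Real.sqrt Real.pi ^ n / Real.Gamma (n / 2 + 1) with hωdef
  have hω : 0 < ω := by
    apply div_pos (pow_pos (Real.sqrt_pos.2 Real.pi_pos) n)
    exact Real.Gamma_pos_of_pos (by positivity)
  set κ : ℝ := ω * (1 - (1 / 2 : ℝ) ^ n) with hκdef
  have hκ : 0 < κ := by
    apply mul_pos hω
    have : (1 / 2 : ℝ) ^ n < 1 := pow_lt_one₀ (by norm_num) (by norm_num) (by omega)
    linarith
  set ε : ℝ := κ / 2 ^ (n + 2) with hεdef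
  have hε : 0 < ε := by positivity
  refine ⟨ε ^ 2 * κ / 4, by positivity, ?_⟩
  intro r hr S hSmeas hSsub hSvol
  set A : Set (EuclideanSpace ℝ (Fin n)) :=
    {y : EuclideanSpace ℝ (Fin n) | r / 2 < ‖y‖ ∧ ‖y‖ ≤ r} with hAdef
  -- volume of the annulus
  have hAeq : A = Metric.closedBall (0 : EuclideanSpace ℝ (Fin n)) r \
      Metric.closedBall 0 (r / 2) := by
    ext y
    simp only [hAdef, Set.mem_setOf_eq, Set.mem_diff, Metric.mem_closedBall,
      dist_zero_right]
    constructor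
    · rintro ⟨h1, h2⟩; exact ⟨h2, not_le.2 h1⟩
    · rintro ⟨h1, h2⟩; exact ⟨not_le.1 h2, h1⟩
  have hvolA : volume A = ENNReal.ofReal (κ * r ^ n) := by
    rw [hAeq, measure_diff (Metric.closedBall_subset_closedBall (by linarith))
      measurableSet_closedBall.nullMeasurableSet (by
        rw [EuclideanSpace.volume_closedBall]; exact ENNReal.mul_ne_top
          (by simp [ENNReal.pow_ne_top]) ENNReal.ofReal_ne_top)]
    rw [EuclideanSpace.volume_closedBall, EuclideanSpace.volume_closedBall]
    simp only [Fintype.card_fin]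
    rw [← ENNReal.ofReal_pow hr.le, ← ENNReal.ofReal_pow (by linarith : (0:ℝ) ≤ r / 2),
      ← ENNReal.ofReal_mul (by positivity), ← ENNReal.ofReal_mul (by positivity),
      ← ENNReal.ofReal_sub _ (by positivity)]
    congr 1
    have : (r / 2) ^ n = (1 / 2 : ℝ) ^ n * r ^ n := by
      rw [div_eq_mul_one_div r 2, mul_comm r, mul_pow]
    rw [this, hκdef]
    ring
  -- the slab
  set Sl : Set (EuclideanSpace ℝ (Fin n)) := {y | |y i0| ≤ ε * r} with hSldef
  have hSlmeas : MeasurableSet Sl := by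
    have hcoord : Measurable fun y : EuclideanSpace ℝ (Fin n) => y i0 :=
      (measurable_pi_apply i0).comp ((MeasurableEquiv.toLp 2 (Fin n → ℝ)).symm).measurable
    exact measurableSet_le hcoord.abs measurable_const
  -- volume of slab ∩ annulus
  have hvolSl : volume (A ∩ Sl) ≤ ENNReal.ofReal (κ * r ^ n / 4) := by
    set g : Fin n → Set ℝ := fun i =>
      if i = i0 then Set.Icc (-(ε * r)) (ε * r) else Set.Icc (-r) r with hgdef
    have hgm : MeasurableSet (Set.pi Set.univ g) := by
      apply MeasurableSet.univ_pi
      intro i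
      by_cases h : i = i0 <;> simp [hgdef, h]
    have hsub : A ∩ Sl ⊆ ((MeasurableEquiv.toLp 2 (Fin n → ℝ)).symm) ⁻¹' (Set.pi Set.univ g) := by
      rintro y ⟨⟨hy1, hy2⟩, hy3⟩ i _
      have hcoord : |y i| ≤ ‖y‖ := by
        rw [EuclideanSpace.norm_eq]
        have h1 : |y i| = Real.sqrt (|y i| ^ 2) := by
          rw [Real.sqrt_sq_eq_abs, abs_abs]
        rw [h1]
        apply Real.sqrt_le_sqrt
        exact Finset.single_le_sum (f := fun j => |y j| ^ 2)
          (fun j _ => sq_nonneg _) (Finset.mem_univ i)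
      by_cases h : i = i0
      · subst h
        simp only [hgdef, if_pos rfl, Set.mem_Icc]
        exact abs_le.1 hy3
      · simp only [hgdef, if_neg h, Set.mem_Icc]
        exact abs_le.1 (hcoord.trans hy2)
    calc volume (A ∩ Sl) ≤ volume (((MeasurableEquiv.toLp 2 (Fin n → ℝ)).symm) ⁻¹'
          (Set.pi Set.univ g)) := measure_mono hsub
      _ = volume (Set.pi Set.univ g) :=
          (EuclideanSpace.volume_preserving_symm_measurableEquiv_toLp (Fin n)).measure_preimage
            hgm.nullMeasurableSet
      _ ≤ ENNReal.ofReal (κ * r ^ n / 4) := by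
          rw [volume_pi_pi]
          have hprod : ∏ i, volume (g i) =
              ENNReal.ofReal (2 * (ε * r)) * ENNReal.ofReal (2 * r) ^ (n - 1) := by
            rw [← Finset.mul_prod_erase Finset.univ _ (Finset.mem_univ i0)]
            have h1 : volume (g i0) = ENNReal.ofReal (2 * (ε * r)) := by
              simp only [hgdef, if_pos rfl, Real.volume_Icc]
              congr 1; ring
            have h2 : ∏ i ∈ Finset.univ.erase i0, volume (g i) =
                ENNReal.ofReal (2 * r) ^ (n - 1) := by
              rw [Finset.prod_congr rfl (fun i hi => ?_), Finset.prod_const,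
                Finset.card_erase_of_mem (Finset.mem_univ i0), Finset.card_univ,
                Fintype.card_fin]
              simp only [hgdef, if_neg (Finset.ne_of_mem_erase hi), Real.volume_Icc]
              congr 1; ring
            rw [h1, h2]
          rw [hprod, ← ENNReal.ofReal_pow (by positivity), ← ENNReal.ofReal_mul (by positivity)]
          apply ENNReal.ofReal_le_ofReal
          obtain ⟨m, rfl⟩ : ∃ m, n = m + 1 := ⟨n - 1, by omega⟩
          have : (2 : ℝ) * (ε * r) * (2 * r) ^ (m + 1 - 1) =
              ε * 2 ^ (m + 1) * r ^ (m + 1) := by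
            simp only [Nat.add_sub_cancel, mul_pow, pow_succ]
            ring
          apply le_of_eq
          rw [this, hεdef, pow_add]
          field_simp
          ring
  -- the good set
  set T : Set (EuclideanSpace ℝ (Fin n)) := S \ Sl with hTdef
  have hTmeas : MeasurableSet T := hSmeas.diff hSlmeas
  have hSsplit : S ⊆ T ∪ (A ∩ Sl) := by
    intro y hy
    by_cases h : y ∈ Sl
    · exact Or.inr ⟨hSsub hy, h⟩
    · exact Or.inl ⟨hy, h⟩
  have hvolAfin : volume A ≠ ⊤ := by rw [hvolA]; exact ENNReal.ofReal_ne_top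
  have hvolTfin : volume T ≠ ⊤ := by
    refine ne_top_of_le_ne_top hvolAfin (measure_mono ?_)
    exact fun y hy => hSsub hy.1
  -- lower bound on volume T
  have hvolT : ENNReal.ofReal (κ * r ^ n / 4) ≤ volume T := by
    have h1 : volume S ≤ volume T + ENNReal.ofReal (κ * r ^ n / 4) :=
      le_trans (measure_mono hSsplit) (le_trans (measure_union_le _ _)
        (add_le_add_right hvolSl _))
    have h2 : ENNReal.ofReal (κ * r ^ n) ≤ 2 * volume T + 2 * ENNReal.ofReal (κ * r ^ n / 4) := by
      calc ENNReal.ofReal (κ * r ^ n) = volume A := hvolA.symm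
        _ ≤ 2 * volume S := hSvol
        _ ≤ 2 * (volume T + ENNReal.ofReal (κ * r ^ n / 4)) := by
            exact mul_le_mul_right h1 2
        _ = 2 * volume T + 2 * ENNReal.ofReal (κ * r ^ n / 4) := by ring
    have h3 : ENNReal.ofReal (κ * r ^ n) =
        2 * ENNReal.ofReal (κ * r ^ n / 4) + 2 * ENNReal.ofReal (κ * r ^ n / 4) := by
      rw [← ENNReal.ofReal_ofNat, ← ENNReal.ofReal_mul (by norm_num), ← ENNReal.ofReal_add
        (by positivity) (by positivity)]
      congr 1; ring
    have h4 : 2 * ENNReal.ofReal (κ * r ^ n / 4) ≤ 2 * volume T := by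
      rw [h3] at h2
      exact ENNReal.le_of_add_le_add_right (by simp [ENNReal.mul_ne_top]) h2
    exact (ENNReal.mul_le_mul_iff_right (by norm_num) (by norm_num)).1 h4
  -- pointwise lower bound on T
  set f : EuclideanSpace ℝ (Fin n) → ℝ := fun y => (y i0) ^ 2 / ‖y‖ ^ ((n : ℝ) + 2) with hfdef
  have hfnonneg : ∀ y, 0 ≤ f y := fun y =>
    div_nonneg (sq_nonneg _) (Real.rpow_nonneg (norm_nonneg _) _)
  have hfmeas : Measurable f := by
    have hcoord : Measurable fun y : EuclideanSpace ℝ (Fin n) => y i0 :=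
      (measurable_pi_apply i0).comp ((MeasurableEquiv.toLp 2 (Fin n → ℝ)).symm).measurable
    exact (hcoord.pow_const 2).div
      ((Real.continuous_rpow_const (by positivity)).measurable.comp measurable_norm)
  have hfbound : ∀ y ∈ S, f y ≤ r ^ 2 / (r / 2) ^ ((n : ℝ) + 2) := by
    intro y hy
    obtain ⟨hy1, hy2⟩ := hSsub hy
    have hny : (0:ℝ) < ‖y‖ := lt_trans (by linarith) hy1
    have hcoord : |y i0| ≤ ‖y‖ := by
      rw [EuclideanSpace.norm_eq]
      have h1 : |y i0| = Real.sqrt (|y i0| ^ 2) := by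
        rw [Real.sqrt_sq_eq_abs, abs_abs]
      rw [h1]
      apply Real.sqrt_le_sqrt
      exact Finset.single_le_sum (f := fun j => |y j| ^ 2)
        (fun j _ => sq_nonneg _) (Finset.mem_univ i0)
    apply div_le_div₀ (by positivity)
    · calc (y i0) ^ 2 = |y i0| ^ 2 := (sq_abs _).symm
        _ ≤ ‖y‖ ^ 2 := by apply pow_le_pow_left₀ (abs_nonneg _) hcoord
        _ ≤ r ^ 2 := by apply pow_le_pow_left₀ (norm_nonneg _) hy2
    · positivity
    · exact Real.rpow_le_rpow (by positivity) (le_of_lt hy1) (by positivity)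
  have hfint : IntegrableOn f S := by
    apply Measure.integrableOn_of_bounded
      (ne_top_of_le_ne_top hvolAfin (measure_mono hSsub))
      hfmeas.aestronglyMeasurable
    · filter_upwards [ae_restrict_mem hSmeas] with y hy
      rw [Real.norm_eq_abs, abs_of_nonneg (hfnonneg y)]
      exact hfbound y hy
  have hflow : ∀ y ∈ T, ε ^ 2 / r ^ (n : ℝ) * (1 / 4 : ℝ) * 4 ≤ f y := by
    intro y hy
    obtain ⟨hyS, hySl⟩ := hy
    obtain ⟨hy1, hy2⟩ := hSsub hyS
    have hny : (0:ℝ) < ‖y‖ := lt_trans (by linarith) hy1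
    have habs : ε * r < |y i0| := not_le.1 hySl
    have hnum : (ε * r) ^ 2 ≤ (y i0) ^ 2 := by
      rw [← sq_abs (y i0)]
      apply pow_le_pow_left₀ (by positivity) habs.le
    have hden : (0:ℝ) < ‖y‖ ^ ((n : ℝ) + 2) := Real.rpow_pos_of_pos hny _
    have hdenle : ‖y‖ ^ ((n : ℝ) + 2) ≤ r ^ ((n : ℝ) + 2) :=
      Real.rpow_le_rpow (norm_nonneg _) hy2 (by positivity)
    have key : (ε * r) ^ 2 / r ^ ((n : ℝ) + 2) ≤ f y :=
      div_le_div₀ (sq_nonneg _) hnum hden hdenle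
    have heq : (ε * r) ^ 2 / r ^ ((n : ℝ) + 2) = ε ^ 2 / r ^ (n : ℝ) := by
      rw [Real.rpow_add hr, Real.rpow_two, mul_pow]
      field_simp
    calc ε ^ 2 / r ^ (n : ℝ) * (1/4 : ℝ) * 4 = ε ^ 2 / r ^ (n : ℝ) := by ring
      _ = (ε * r) ^ 2 / r ^ ((n : ℝ) + 2) := heq.symm
      _ ≤ f y := key
  -- conclude
  have hTtoReal : κ * r ^ n / 4 ≤ (volume T).toReal :=
    (ENNReal.ofReal_le_iff_le_toReal hvolTfin).1 hvolT
  have step1 : ε ^ 2 / r ^ (n : ℝ) * (volume T).toReal ≤ ∫ y in T, f y :=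
    setIntegral_ge_of_const_le_real hTmeas hvolTfin
      (fun y hy => le_trans (le_of_eq (by ring)) (hflow y hy))
      (hfint.mono_set (fun y hy => hy.1))
  have step2 : (∫ y in T, f y) ≤ ∫ y in S, f y :=
    setIntegral_mono_set hfint (Filter.Eventually.of_forall hfnonneg)
      (HasSubset.Subset.eventuallyLE (fun y hy => hy.1))
  have step0 : ε ^ 2 * κ / 4 ≤ ε ^ 2 / r ^ (n : ℝ) * (volume T).toReal := by
    have hrn : (0:ℝ) < r ^ (n : ℝ) := Real.rpow_pos_of_pos hr _
    have hrn' : r ^ (n : ℝ) = r ^ n := Real.rpow_natCast r n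
    calc ε ^ 2 * κ / 4 = ε ^ 2 / r ^ (n : ℝ) * (κ * r ^ n / 4) := by
          rw [hrn']; field_simp
      _ ≤ ε ^ 2 / r ^ (n : ℝ) * (volume T).toReal := by
          apply mul_le_mul_of_nonneg_left hTtoReal (by positivity)
  exact le_trans step0 (le_trans step1 step2)
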